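/- Let $(\mathfrak{g}, r, \psi)$ be a Lie algebra with a twisted triangular $r$-matrix structure, and let $\mathfrak{p} = \mathrm{Im}\, r^\sharp$ be the carrier subalgebra. Then $\mathrm{Ker}\, r^\sharp \subset \mathfrak{g}^*$ is stable under the coadjoint action of $\mathfrak{p}$: for all $X \in \mathfrak{p}$ and $\gamma \in \mathrm{Ker}\, r^\sharp$, $\mathrm{ad}^*_X(\gamma) \in \mathrm{Ker}\, r^\sharp$. -/
import Mathlib


/-- The bracket `[α,β]_{r,ψ} = ad*_{r^♯α}(β) - ad*_{r^♯β}(α) + ψ(r^♯α, r^♯β, ·)`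
on the dual of a Lie algebra `g`, where `r^♯` is the map induced by `r ∈ ∧²g` and
`ψ` is a trilinear form (a 3-cochain of `g`), written here in curried form. -/
noncomputable def twBracket {g : Type*} [LieRing g] [LieAlgebra ℝ g]
    (rsharp : Module.Dual ℝ g →ₗ[ℝ] g)
    (ψ : g →ₗ[ℝ] g →ₗ[ℝ] Module.Dual ℝ g)
    (α β : Module.Dual ℝ g) : Module.Dual ℝ g :=
  ψ (rsharp α) (rsharp β)
    - β ∘ₗ (LieAlgebra.ad ℝ g (rsharp α))
    + α ∘ₗ (LieAlgebra.ad ℝ g (rsharp β))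

/-- the kernel of `r^♯` is stable under the coadjoint action `ad*_X γ = -γ∘ad_X` of the carrier `p = Im r^♯`. -/
theorem statement3 (g : Type*) [LieRing g] [LieAlgebra ℝ g] [FiniteDimensional ℝ g]
    (rsharp : Module.Dual ℝ g →ₗ[ℝ] g)
    (hskew : ∀ α β : Module.Dual ℝ g, β (rsharp α) = - α (rsharp β))
    (ψ : g →ₗ[ℝ] g →ₗ[ℝ] Module.Dual ℝ g)
    (halt1 : ∀ X Y : g, ψ X X Y = 0)
    (halt2 : ∀ X Y : g, ψ X Y Y = 0)
    (hcocycle : ∀ X Y Z W : g,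
      ψ ⁅X, Y⁆ Z W - ψ ⁅X, Z⁆ Y W + ψ ⁅X, W⁆ Y Z
        + ψ ⁅Y, Z⁆ X W - ψ ⁅Y, W⁆ X Z + ψ ⁅Z, W⁆ X Y = 0)
    (hcybe : ∀ α β γ : Module.Dual ℝ g,
      γ ⁅rsharp α, rsharp β⁆ + α ⁅rsharp β, rsharp γ⁆ + β ⁅rsharp γ, rsharp α⁆
        = - ψ (rsharp α) (rsharp β) (rsharp γ)) :
    ∀ X : g, (∃ α : Module.Dual ℝ g, rsharp α = X) →
      ∀ γ : Module.Dual ℝ g, rsharp γ = 0 →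
        rsharp (-(γ ∘ₗ (LieAlgebra.ad ℝ g X))) = 0 := by
  rintro X ⟨α, rfl⟩ γ hγ
  rw [← Module.forall_dual_apply_eq_zero_iff ℝ]
  intro β
  rw [hskew]
  have h := hcybe α β γ
  rw [hγ] at h
  simp only [lie_zero, zero_lie, map_zero, LinearMap.zero_apply, map_zero, add_zero,
    neg_zero] at h
  simpa [LieAlgebra.ad_apply, h] using h
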